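/- arXiv:0902.2924 — 2 statements merged into one kernel-verified Lean document; each statement's English description precedes it below -/
import Mathlib

section
/- Proposition 2.1: If Θ is the closed ℓ¹-ball 𝔅^q_c = {θ ∈ ℝ^q : ‖θ‖₁ ≤ c} for some c > 0 and q ≥ 1, π is the uniform probability measure (normalized Lebesgue measure) on Θ, R: Θ → ℝ is Lipschitz with constant C with respect to the ℓ¹ norm, and θ̄ ∈ Θ is a minimizer of R with ‖θ̄‖₁ < c, then sup_{γ > e} [ −log ∫_Θ exp(−γ(R(θ) − R(θ̄))) dπ(θ) ] / log γ ≤ q · ( 1 + log( c · max{ Ce/q , 1/(c − ‖θ̄‖₁) } ) ). -/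
open MeasureTheory Pointwise

private lemma l1ball_closed (q : ℕ) (t : ℝ) :
    IsClosed {θ : Fin q → ℝ | ∑ i, |θ i| ≤ t} :=
  isClosed_le (continuous_finset_sum _ fun i _ => (continuous_apply i).abs) continuous_const

private lemma l1ball_smul (q : ℕ) {t : ℝ} (ht : 0 < t) :
    {θ : Fin q → ℝ | ∑ i, |θ i| ≤ t} = t • {θ : Fin q → ℝ | ∑ i, |θ i| ≤ 1} := by
  ext θ
  rw [Set.mem_smul_set_iff_inv_smul_mem₀ ht.ne']
  simp only [Set.mem_setOf_eq, Pi.smul_apply, smul_eq_mul, abs_mul, abs_inv, abs_of_pos ht,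
    ← Finset.mul_sum]
  rw [inv_mul_le_iff₀ ht, mul_one]

private lemma l1ball_volume (q : ℕ) {t : ℝ} (ht : 0 < t) :
    volume {θ : Fin q → ℝ | ∑ i, |θ i| ≤ t}
      = ENNReal.ofReal (t ^ q) * volume {θ : Fin q → ℝ | ∑ i, |θ i| ≤ 1} := by
  rw [l1ball_smul q ht, Measure.addHaar_smul_of_nonneg volume ht.le,
    Module.finrank_fintype_fun_eq_card, Fintype.card_fin]

private lemma l1ball_volume_pos (q : ℕ) :
    0 < volume {θ : Fin q → ℝ | ∑ i, |θ i| ≤ 1} := by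
  have hopen : IsOpen {θ : Fin q → ℝ | ∑ i, |θ i| < 1} :=
    isOpen_lt (continuous_finset_sum _ fun i _ => (continuous_apply i).abs) continuous_const
  have h0 : (0 : Fin q → ℝ) ∈ {θ : Fin q → ℝ | ∑ i, |θ i| < 1} := by simp
  calc (0 : ENNReal) < volume {θ : Fin q → ℝ | ∑ i, |θ i| < 1} :=
        hopen.measure_pos volume ⟨0, h0⟩
    _ ≤ _ := measure_mono (Set.setOf_subset_setOf.mpr fun θ => le_of_lt)

private lemma l1ball_volume_lt_top (q : ℕ) :
    volume {θ : Fin q → ℝ | ∑ i, |θ i| ≤ 1} < ⊤ := by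
  have hsub : {θ : Fin q → ℝ | ∑ i, |θ i| ≤ 1}
      ⊆ Set.pi Set.univ fun _ : Fin q => Set.Icc (-1 : ℝ) 1 := by
    intro θ hθ i _
    have h1 : |θ i| ≤ ∑ j, |θ j| :=
      Finset.single_le_sum (f := fun j => |θ j|) (fun j _ => abs_nonneg _) (Finset.mem_univ i)
    have h2 := abs_le.mp (h1.trans hθ)
    exact ⟨h2.1, h2.2⟩
  calc volume {θ : Fin q → ℝ | ∑ i, |θ i| ≤ 1}
      ≤ volume (Set.pi Set.univ fun _ : Fin q => Set.Icc (-1 : ℝ) 1) := measure_mono hsub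
    _ < ⊤ := by
        rw [volume_pi_pi]
        simp only [Real.volume_Icc, Finset.prod_const, Finset.card_univ, Fintype.card_fin]
        exact ENNReal.pow_lt_top ENNReal.ofReal_lt_top

set_option maxHeartbeats 1000000 in
/-- Proposition 2.1: complexity bound for the uniform prior on an ℓ¹-ball.
If `Θ = 𝔅^q_c` is the closed ℓ¹-ball of radius `c` in `ℝ^q`, `π` is the uniform
(normalized Lebesgue) probability measure on it, `R` is `C`-Lipschitz for the ℓ¹ norm
and `θ̄` is a minimizer of `R` on `Θ` with `‖θ̄‖₁ < c`, then for every `γ > e`,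
`−log ∫ exp(−γ(R(θ)−R(θ̄))) dπ / log γ ≤ q(1 + log(c·max(Ce/q, 1/(c−‖θ̄‖₁))))`. -/
theorem complexity_l1_ball
    (q : ℕ) (hq : 1 ≤ q) (c : ℝ) (hc : 0 < c) (C : ℝ) (hC : 0 < C)
    (R : (Fin q → ℝ) → ℝ)
    (hR : ∀ θ θ' : Fin q → ℝ, |R θ - R θ'| ≤ C * ∑ i, |θ i - θ' i|)
    (θbar : Fin q → ℝ) (hθbar_mem : ∑ i, |θbar i| < c)
    (hθbar_min : ∀ θ : Fin q → ℝ, ∑ i, |θ i| ≤ c → R θbar ≤ R θ)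
    (π : Measure (Fin q → ℝ))
    (hπ : π = (volume {θ : Fin q → ℝ | ∑ i, |θ i| ≤ c})⁻¹ •
        volume.restrict {θ : Fin q → ℝ | ∑ i, |θ i| ≤ c}) :
    ∀ γ : ℝ, Real.exp 1 < γ →
      (- Real.log (∫ θ, Real.exp (-γ * (R θ - R θbar)) ∂π)) / Real.log γ
        ≤ (q : ℝ) * (1 + Real.log (c * max (C * Real.exp 1 / q)
            (1 / (c - ∑ i, |θbar i|)))) := by
  intro γ hγ
  set s := ∑ i, |θbar i| with hs_def
  have hs0 : 0 ≤ s := Finset.sum_nonneg fun i _ => abs_nonneg _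
  have hcs : 0 < c - s := sub_pos.mpr hθbar_mem
  have hγ0 : 0 < γ := lt_trans (Real.exp_pos 1) hγ
  have hlogγ : 1 < Real.log γ := by
    have h := Real.log_lt_log (Real.exp_pos 1) hγ
    rwa [Real.log_exp] at h
  have hq0 : (0 : ℝ) < q := by exact_mod_cast hq
  set r := min ((q : ℝ) / (γ * C)) (c - s) with hr_def
  have hr0 : 0 < r := lt_min (div_pos hq0 (mul_pos hγ0 hC)) hcs
  have hrc : r ≤ c - s := min_le_right _ _
  have hrq : γ * C * r ≤ q := by
    have h1 : r ≤ (q : ℝ) / (γ * C) := min_le_left _ _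
    calc γ * C * r ≤ γ * C * ((q : ℝ) / (γ * C)) :=
          mul_le_mul_of_nonneg_left h1 (by positivity)
      _ = q := by field_simp
  set S := {θ : Fin q → ℝ | ∑ i, |θ i| ≤ c} with hS_def
  set B := {θ : Fin q → ℝ | ∑ i, |θ i - θbar i| ≤ r} with hB_def
  have hBS : B ⊆ S := by
    intro θ hθ
    simp only [hB_def, hS_def, Set.mem_setOf_eq] at hθ ⊢
    calc ∑ i, |θ i| ≤ ∑ i, (|θ i - θbar i| + |θbar i|) := by
          apply Finset.sum_le_sum
          intro i _
          calc |θ i| = |(θ i - θbar i) + θbar i| := by ring_nf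
            _ ≤ |θ i - θbar i| + |θbar i| := abs_add_le _ _
      _ = (∑ i, |θ i - θbar i|) + s := by rw [Finset.sum_add_distrib]
      _ ≤ r + s := add_le_add_left hθ s
      _ ≤ c := by linarith
  -- continuity of R
  have hRcont : Continuous R := by
    have hlip : LipschitzWith ⟨C * q, by positivity⟩ R := by
      apply LipschitzWith.of_dist_le_mul
      intro x y
      rw [Real.dist_eq]
      calc |R x - R y| ≤ C * ∑ i, |x i - y i| := hR x y
        _ ≤ C * ∑ _i : Fin q, dist x y := by
            apply mul_le_mul_of_nonneg_left _ hC.le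
            apply Finset.sum_le_sum
            intro i _
            rw [← Real.dist_eq]
            exact dist_le_pi_dist x y i
        _ = C * q * dist x y := by
            rw [Finset.sum_const, Finset.card_univ, Fintype.card_fin, nsmul_eq_mul]
            ring
    exact hlip.continuous
  set f : (Fin q → ℝ) → ℝ := fun θ => Real.exp (-γ * (R θ - R θbar)) with hf_def
  have hfcont : Continuous f :=
    Real.continuous_exp.comp (continuous_const.mul (hRcont.sub continuous_const))
  have hf_nonneg : ∀ θ, 0 ≤ f θ := fun θ => (Real.exp_pos _).le
  -- measure facts
  have hSmeas : MeasurableSet S := (l1ball_closed q c).measurableSet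
  have hBmeas : MeasurableSet B := by
    apply IsClosed.measurableSet
    exact isClosed_le (continuous_finset_sum _ fun i _ =>
      ((continuous_apply i).sub continuous_const).abs) continuous_const
  set V1 := volume {θ : Fin q → ℝ | ∑ i, |θ i| ≤ 1} with hV1_def
  have hV1pos : 0 < V1 := l1ball_volume_pos q
  have hV1top : V1 < ⊤ := l1ball_volume_lt_top q
  have hV1r : 0 < V1.toReal := ENNReal.toReal_pos hV1pos.ne' hV1top.ne
  have hVS : volume S = ENNReal.ofReal (c ^ q) * V1 := l1ball_volume q hc
  have hVB : volume B = ENNReal.ofReal (r ^ q) * V1 := by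
    have hsum : ∀ θ : Fin q → ℝ, ∑ i, |(-θbar + θ) i| = ∑ i, |θ i - θbar i| := by
      intro θ
      apply Finset.sum_congr rfl
      intro i _
      rw [Pi.add_apply, Pi.neg_apply, show -θbar i + θ i = θ i - θbar i from by ring]
    have hBeq : B = (fun θ => -θbar + θ) ⁻¹' {θ : Fin q → ℝ | ∑ i, |θ i| ≤ r} := by
      ext θ
      simp only [hB_def, Set.mem_preimage, Set.mem_setOf_eq, hsum θ]
    rw [hBeq, measure_preimage_add, l1ball_volume q hr0]
  have hVSne0 : volume S ≠ 0 := by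
    rw [hVS]
    exact mul_ne_zero (by simp [ENNReal.ofReal_eq_zero, not_le]; positivity) hV1pos.ne'
  have hVStop : volume S ≠ ⊤ := by
    rw [hVS]
    exact ENNReal.mul_ne_top ENNReal.ofReal_ne_top hV1top.ne
  have hVBtop : volume B ≠ ⊤ := by
    rw [hVB]
    exact ENNReal.mul_ne_top ENNReal.ofReal_ne_top hV1top.ne
  -- integrability and bounds
  have hf_le_one : ∀ θ ∈ S, f θ ≤ 1 := by
    intro θ hθ
    rw [hf_def]
    apply Real.exp_le_one_iff.mpr
    have h := hθbar_min θ hθ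
    nlinarith
  have hInt : IntegrableOn f S volume := by
    apply Measure.integrableOn_of_bounded (M := 1) hVStop hfcont.aestronglyMeasurable
    filter_upwards [ae_restrict_mem hSmeas] with θ hθ
    rw [Real.norm_eq_abs, abs_of_pos (Real.exp_pos _)]
    exact hf_le_one θ hθ
  have hfB : ∀ θ ∈ B, Real.exp (-(q : ℝ)) ≤ f θ := by
    intro θ hθ
    apply Real.exp_le_exp.mpr
    have h2 : ∑ i, |θ i - θbar i| ≤ r := hθ
    have h3 : R θ - R θbar ≤ C * r := by
      have h4 := le_trans (le_abs_self _) (hR θ θbar)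
      nlinarith [mul_le_mul_of_nonneg_left h2 hC.le]
    nlinarith [mul_le_mul_of_nonneg_left h3 hγ0.le]
  have h2 : Real.exp (-(q : ℝ)) * (volume B).toReal ≤ ∫ θ in B, f θ :=
    by rw [mul_comm, ← smul_eq_mul, ← Measure.real_def]; exact setIntegral_ge_of_const_le hBmeas hVBtop hfB (hInt.mono_set hBS)
  have h1 : ∫ θ in B, f θ ≤ ∫ θ in S, f θ :=
    setIntegral_mono_set hInt (ae_of_all _ hf_nonneg) (HasSubset.Subset.eventuallyLE hBS)
  have hπint : ∫ θ, f θ ∂π = (volume S)⁻¹.toReal * ∫ θ in S, f θ := by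
    rw [hπ, integral_smul_measure, smul_eq_mul]
  set L := Real.exp (-(q : ℝ)) * (r / c) ^ q with hL_def
  have hLpos : 0 < L := by positivity
  have hcoef : (volume S)⁻¹.toReal * (volume B).toReal = (r / c) ^ q := by
    rw [hVS, hVB, ENNReal.toReal_inv, ENNReal.toReal_mul, ENNReal.toReal_mul,
      ENNReal.toReal_ofReal (pow_nonneg hc.le q), ENNReal.toReal_ofReal (pow_nonneg hr0.le q),
      div_pow]
    have hcq : (0 : ℝ) < c ^ q := by positivity
    field_simp
  have key : L ≤ ∫ θ, f θ ∂π := by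
    rw [hπint]
    calc L = (volume S)⁻¹.toReal * (Real.exp (-(q : ℝ)) * (volume B).toReal) := by
          rw [hL_def, ← hcoef]; ring
      _ ≤ (volume S)⁻¹.toReal * ∫ θ in S, f θ :=
          mul_le_mul_of_nonneg_left (le_trans h2 h1) ENNReal.toReal_nonneg
  have hlogI : Real.log L ≤ Real.log (∫ θ, f θ ∂π) := Real.log_le_log hLpos key
  have hlogL : Real.log L = -(q : ℝ) - (q : ℝ) * Real.log (c / r) := by
    rw [hL_def, Real.log_mul (Real.exp_ne_zero _) (by positivity), Real.log_exp,
      Real.log_pow]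
    have : Real.log (r / c) = -Real.log (c / r) := by
      rw [← Real.log_inv, inv_div]
    rw [this]
    ring
  -- arithmetic with M
  set M := max (C * Real.exp 1 / q) (1 / (c - s)) with hM_def
  have hM1 : 1 ≤ c * M := by
    have hle : 1 / (c - s) ≤ M := le_max_right _ _
    have h1c : 1 / c ≤ 1 / (c - s) := by
      apply one_div_le_one_div_of_le hcs
      linarith
    calc (1 : ℝ) = c * (1 / c) := by field_simp
      _ ≤ c * (1 / (c - s)) := mul_le_mul_of_nonneg_left h1c hc.le
      _ ≤ c * M := mul_le_mul_of_nonneg_left hle hc.le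
  have hcM0 : 0 < c * M := lt_of_lt_of_le one_pos hM1
  have hcr : c / r ≤ (γ / Real.exp 1) * (c * M) := by
    have hγe : 1 ≤ γ / Real.exp 1 := by
      rw [le_div_iff₀ (Real.exp_pos 1)]
      linarith
    rcases le_total ((q : ℝ) / (γ * C)) (c - s) with h | h
    · have hreq : r = (q : ℝ) / (γ * C) := min_eq_left h
      have hle : C * Real.exp 1 / q ≤ M := le_max_left _ _
      calc c / r = (γ / Real.exp 1) * (c * (C * Real.exp 1 / q)) := by
            rw [hreq]
            field_simp
        _ ≤ (γ / Real.exp 1) * (c * M) := by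
            apply mul_le_mul_of_nonneg_left (mul_le_mul_of_nonneg_left hle hc.le)
            positivity
    · have hreq : r = c - s := min_eq_right h
      have hle : 1 / (c - s) ≤ M := le_max_right _ _
      calc c / r = c * (1 / (c - s)) := by rw [hreq]; ring
        _ ≤ c * M := mul_le_mul_of_nonneg_left hle hc.le
        _ = 1 * (c * M) := (one_mul _).symm
        _ ≤ (γ / Real.exp 1) * (c * M) := mul_le_mul_of_nonneg_right hγe hcM0.le
  have hlog_cr : Real.log (c / r) ≤ Real.log γ - 1 + Real.log (c * M) := by
    calc Real.log (c / r) ≤ Real.log ((γ / Real.exp 1) * (c * M)) :=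
          Real.log_le_log (by positivity) hcr
      _ = Real.log γ - 1 + Real.log (c * M) := by
          rw [Real.log_mul (by positivity) hcM0.ne', Real.log_div hγ0.ne' (Real.exp_ne_zero 1),
            Real.log_exp]
  have hlogM0 : 0 ≤ Real.log (c * M) := Real.log_nonneg hM1
  have hA : -Real.log (∫ θ, f θ ∂π) ≤ (q : ℝ) * Real.log γ + (q : ℝ) * Real.log (c * M) := by
    have h5 : -Real.log (∫ θ, f θ ∂π) ≤ (q : ℝ) + (q : ℝ) * Real.log (c / r) := by
      have := hlogI
      rw [hlogL] at this
      linarith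
    nlinarith [mul_le_mul_of_nonneg_left hlog_cr hq0.le]
  rw [div_le_iff₀ (by linarith : (0 : ℝ) < Real.log γ)]
  nlinarith [mul_le_mul_of_nonneg_left hlogM0 hq0.le]
end

section
/- Proposition 4.3 (θ_∞ bound for uniform φ-mixing processes): Let (X_t)_{t∈ℤ} be a stationary 𝒳-valued process with ‖X₀‖_∞ := ess sup ‖X₀‖ < ∞, and for r ≥ 1 let φ(r) = sup { |P(B|A) − P(B)| : A ∈ σ(X_t, t ≤ 0) with P(A) > 0, B ∈ σ(X_t, t ≥ r) }. Then for every n ≥ 1, every 1 ≤ ℓ ≤ n, every indices 1 ≤ j₁ < … < j_ℓ ≤ n, and every 1-Lipschitz function f: 𝒳^ℓ → ℝ (𝒳^ℓ equipped with the norm ‖z‖ = Σ_{i=1}^ℓ ‖z_i‖), one has, almost surely, |E( f(X_{j₁},…,X_{j_ℓ}) | σ(X_t, t ≤ 0) ) − E f(X_{j₁},…,X_{j_ℓ})| ≤ 2‖X₀‖_∞ Σ_{r=1}^n φ(r); that is, θ_{∞,n}(1) ≤ 2‖X₀‖_∞ Σ_{r=1}^n φ(r). -/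
open MeasureTheory ProbabilityTheory


lemma integral_diff_le_of_meas_diff_le {Ω : Type*} {mr : MeasurableSpace Ω}
    [m : MeasurableSpace Ω]
    (hmr : mr ≤ m) (Q P : Measure Ω) [IsProbabilityMeasure Q] [IsProbabilityMeasure P]
    (hQP : Q ≪ P) {φr : ℝ}
    (hset : ∀ s : Set Ω, MeasurableSet[mr] s → |(Q s).toReal - (P s).toReal| ≤ φr)
    {V : Ω → ℝ} (hV : Measurable[mr] V) {M : ℝ} (hVbd : ∀ᵐ ω ∂P, |V ω| ≤ M) :
    |∫ ω, V ω ∂Q - ∫ ω, V ω ∂P| ≤ 2 * M * φr := by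
  have hM : 0 ≤ M := by
    obtain ⟨ω, hω⟩ := hVbd.exists
    exact (abs_nonneg _).trans hω
  have hVbdQ : ∀ᵐ ω ∂Q, |V ω| ≤ M := hQP.ae_le hVbd
  set W : Ω → ℝ := fun ω => V ω + M with hW
  have hWm : Measurable[mr] W := hV.add_const M
  have hWmeas : Measurable W := hWm.mono hmr le_rfl
  have hVmeas : Measurable V := hV.mono hmr le_rfl
  have hWbd : ∀ {μ : Measure Ω}, (∀ᵐ ω ∂μ, |V ω| ≤ M) → (0 ≤ᵐ[μ] W ∧ W ≤ᵐ[μ] fun _ => 2 * M) := by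
    intro μ h
    refine ⟨?_, ?_⟩
    · filter_upwards [h] with ω hω
      have h' := abs_le.1 hω
      simp only [W, Pi.zero_apply]
      linarith [h'.1]
    · filter_upwards [h] with ω hω
      have h' := abs_le.1 hω
      simp only [W]
      linarith [h'.2]
  have hVint : ∀ (μ : Measure Ω) [IsProbabilityMeasure μ], (∀ᵐ ω ∂μ, |V ω| ≤ M) →
      Integrable V μ := by
    intro μ _ h
    exact (integrable_const M).mono' hVmeas.aestronglyMeasurable h
  have hWint : ∀ (μ : Measure Ω) [IsProbabilityMeasure μ], (∀ᵐ ω ∂μ, |V ω| ≤ M) →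
      Integrable W μ := by
    intro μ _ h
    exact (hVint μ h).add (integrable_const M)
  have key : ∀ (μ : Measure Ω) [IsProbabilityMeasure μ], (∀ᵐ ω ∂μ, |V ω| ≤ M) →
      ∫ ω, V ω ∂μ = (∫ t in Set.Ioc 0 (2*M), (μ {a | t ≤ W a}).toReal) - M := by
    intro μ _ h
    have h1 := (hWint μ h).integral_eq_integral_Ioc_meas_le (hWbd h).1 (hWbd h).2
    have h2 : ∫ ω, W ω ∂μ = (∫ ω, V ω ∂μ) + M := by
      rw [integral_add (hVint μ h) (integrable_const M), integral_const]
      simp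
    rw [h2] at h1
    simp only [measureReal_def] at h1
    linarith [h1]
  rw [key Q hVbdQ, key P hVbd]
  have hmeasset : ∀ t : ℝ, MeasurableSet[mr] {a | t ≤ W a} :=
    fun t => measurableSet_le measurable_const hWm
  have hanti : ∀ (μ : Measure Ω) [IsProbabilityMeasure μ],
      Antitone (fun t : ℝ => (μ {a | t ≤ W a}).toReal) := by
    intro μ _ s t hst
    exact ENNReal.toReal_mono (measure_ne_top μ _)
      (measure_mono (fun a ha => le_trans hst ha))
  have hint : ∀ (μ : Measure Ω) [IsProbabilityMeasure μ],
      IntegrableOn (fun t : ℝ => (μ {a | t ≤ W a}).toReal) (Set.Ioc 0 (2*M)) := by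
    intro μ _
    refine Integrable.mono' (g := fun _ : ℝ => (1:ℝ))
      (integrableOn_const measure_Ioc_lt_top.ne)
      ((hanti μ).measurable).aestronglyMeasurable ?_
    refine Filter.Eventually.of_forall fun t => ?_
    rw [Real.norm_eq_abs, abs_of_nonneg ENNReal.toReal_nonneg]
    exact ENNReal.toReal_le_of_le_ofReal zero_le_one (by simpa using prob_le_one)
  have hsub : (∫ t in Set.Ioc 0 (2*M), (Q {a | t ≤ W a}).toReal) - M -
      ((∫ t in Set.Ioc 0 (2*M), (P {a | t ≤ W a}).toReal) - M)
      = ∫ t in Set.Ioc 0 (2*M), ((Q {a | t ≤ W a}).toReal - (P {a | t ≤ W a}).toReal) := by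
    rw [integral_sub (hint Q) (hint P)]; ring
  rw [hsub]
  calc |∫ t in Set.Ioc 0 (2*M), ((Q {a | t ≤ W a}).toReal - (P {a | t ≤ W a}).toReal)|
      ≤ ∫ t in Set.Ioc 0 (2*M), φr := by
        rw [← Real.norm_eq_abs]
        refine (norm_integral_le_integral_norm _).trans ?_
        refine integral_mono_of_nonneg (Filter.Eventually.of_forall fun t => norm_nonneg _)
          (integrableOn_const measure_Ioc_lt_top.ne) ?_
        exact Filter.Eventually.of_forall fun t => hset _ (hmeasset t)
    _ ≤ 2 * M * φr := by
        rw [setIntegral_const, measureReal_def, Real.volume_Ioc, smul_eq_mul]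
        have h2 : (ENNReal.ofReal (2*M - 0)).toReal = 2 * M := by
          rw [ENNReal.toReal_ofReal (by linarith)]; ring
        rw [h2]

lemma continuous_of_sum_lip {𝒳 : Type*} [NormedAddCommGroup 𝒳] {ℓ : ℕ}
    {f : (Fin ℓ → 𝒳) → ℝ} (hf : ∀ x y, |f x - f y| ≤ ∑ i, ‖x i - y i‖) : Continuous f := by
  have h : LipschitzWith ℓ f := by
    rw [lipschitzWith_iff_dist_le_mul]
    intro x y
    rw [Real.dist_eq]
    refine (hf x y).trans ?_
    calc ∑ i, ‖x i - y i‖ ≤ ∑ _i : Fin ℓ, dist x y := by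
          refine Finset.sum_le_sum fun i _ => ?_
          rw [dist_eq_norm]
          exact norm_le_pi_norm (x - y) i
      _ = ℓ * dist x y := by simp [Finset.sum_const, nsmul_eq_mul]
    -- coercion
  exact h.continuous

abbrev pastSigma {𝒳 Ω : Type*} [MeasurableSpace 𝒳] (X : ℤ → Ω → 𝒳) : MeasurableSpace Ω :=
  ⨆ (t : ℤ) (_ : t ≤ 0), MeasurableSpace.comap (X t) inferInstance

abbrev futureSigma {𝒳 Ω : Type*} [MeasurableSpace 𝒳] (X : ℤ → Ω → 𝒳) (r : ℕ) :
    MeasurableSpace Ω :=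
  ⨆ (t : ℤ) (_ : (r : ℤ) ≤ t), MeasurableSpace.comap (X t) inferInstance

lemma measurable_pi_lambda' {α : Type*} {δ : Type*} {π : δ → Type*} {mα : MeasurableSpace α}
    [∀ a, MeasurableSpace (π a)] (f : α → ∀ a, π a)
    (hf : ∀ a, Measurable[mα] fun c => f c a) : Measurable[mα] f :=
  measurable_pi_lambda f hf

lemma key_induction {𝒳 : Type*} [NormedAddCommGroup 𝒳]
    [SecondCountableTopology 𝒳] [MeasurableSpace 𝒳] [BorelSpace 𝒳]
    {Ω : Type*} [m : MeasurableSpace Ω] (P : Measure Ω) [IsProbabilityMeasure P]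
    (X : ℤ → Ω → 𝒳) (hXmeas : ∀ t, Measurable (X t))
    (B : ℝ) (hBall : ∀ t : ℤ, ∀ᵐ ω ∂P, ‖X t ω‖ ≤ B)
    (φ : ℕ → ℝ)
    (hφ : ∀ r : ℕ, 1 ≤ r → ∀ A B' : Set Ω,
      MeasurableSet[⨆ (t : ℤ) (_ : t ≤ 0), MeasurableSpace.comap (X t) inferInstance] A →
      MeasurableSet[⨆ (t : ℤ) (_ : (r : ℤ) ≤ t), MeasurableSpace.comap (X t) inferInstance] B' →
      P A ≠ 0 →
      |(P (A ∩ B')).toReal / (P A).toReal - (P B').toReal| ≤ φ r) :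
    ∀ (ℓ : ℕ) (j : Fin ℓ → ℤ), StrictMono j → (∀ i, 1 ≤ j i) →
      ∀ f : (Fin ℓ → 𝒳) → ℝ, (∀ x y, |f x - f y| ≤ ∑ i, ‖x i - y i‖) →
      ∀ A : Set Ω,
      MeasurableSet[⨆ (t : ℤ) (_ : t ≤ 0), MeasurableSpace.comap (X t) inferInstance] A →
      P A ≠ 0 →
      |∫ ω, f (fun i => X (j i) ω) ∂(P[|A]) - ∫ ω, f (fun i => X (j i) ω) ∂P|
        ≤ 2 * B * ∑ i, φ (j i).toNat := by
  have hB0 : 0 ≤ B := by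
    obtain ⟨ω, hω⟩ := (hBall 0).exists
    exact (norm_nonneg _).trans hω
  intro ℓ
  induction ℓ with
  | zero =>
      intro j hjmono hj1 f hf A hA hPA
      haveI : IsProbabilityMeasure (P[|A]) := cond_isProbabilityMeasure hPA
      have hc : ∀ ω : Ω, f (fun i => X (j i) ω) = f Fin.elim0 :=
        fun ω => congrArg f (Subsingleton.elim _ _)
      simp only [hc, integral_const, measure_univ, probReal_univ, ENNReal.toReal_one, one_smul, sub_self,
        abs_zero, Finset.univ_eq_empty, Finset.sum_empty, mul_zero, le_refl]
  | succ mℓ IH =>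
      intro j hjmono hj1 f hf A hA hPA
      haveI : IsProbabilityMeasure (P[|A]) := cond_isProbabilityMeasure hPA
      have hm0 : (⨆ (t : ℤ) (_ : t ≤ 0), MeasurableSpace.comap (X t) inferInstance) ≤ m :=
        iSup_le fun t => iSup_le fun _ => (hXmeas t).comap_le
      have hAm : MeasurableSet A := hm0 _ hA
      set r : ℕ := (j 0).toNat with hrdef
      have hj0 : 1 ≤ j 0 := hj1 0
      have hr1 : 1 ≤ r := by omega
      have hrj : (r : ℤ) = j 0 := Int.toNat_of_nonneg (by omega)
      have hmr : futureSigma X r ≤ m := iSup_le fun t => iSup_le fun _ => (hXmeas t).comap_le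
      have hXmr : ∀ i : Fin (mℓ+1), Measurable[futureSigma X r] (X (j i)) := by
        intro i
        refine Measurable.of_comap_le ?_
        refine le_iSup₂ (f := fun (t : ℤ) (_ : ((r:ℕ):ℤ) ≤ t) =>
          MeasurableSpace.comap (X t) inferInstance) (j i) ?_
        rw [hrj]
        exact hjmono.monotone (Fin.zero_le i)
      have hvec_mr : Measurable[futureSigma X r] (fun ω (i : Fin (mℓ+1)) => X (j i) ω) :=
        measurable_pi_lambda' (mα := futureSigma X r) _ hXmr
      have hvec_m : Measurable (fun ω (i : Fin (mℓ+1)) => X (j i) ω) :=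
        measurable_pi_lambda _ fun i => hXmeas (j i)
      set g : (Fin mℓ → 𝒳) → ℝ := fun x => f (Fin.cons 0 x) with hgdef
      have hg : ∀ x y, |g x - g y| ≤ ∑ i, ‖x i - y i‖ := by
        intro x y
        simpa [Fin.sum_univ_succ] using hf (Fin.cons 0 x) (Fin.cons 0 y)
      have hj'mono : StrictMono (fun i : Fin mℓ => j i.succ) :=
        fun a b hab => hjmono (Fin.succ_lt_succ_iff.2 hab)
      have IHb := IH (fun i : Fin mℓ => j i.succ) hj'mono (fun i => hj1 i.succ) g hg A hA hPA
      set D : Ω → ℝ := fun ω =>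
        f (fun i => X (j i) ω) - g (fun i => X (j i.succ) ω) with hDdef
      have hDbd : ∀ᵐ ω ∂P, |D ω| ≤ B := by
        filter_upwards [hBall (j 0)] with ω hω
        have h2 := hf (fun i => X (j i) ω) (Fin.cons 0 (fun i => X (j i.succ) ω))
        have h3 : |D ω| ≤ ‖X (j 0) ω‖ := by
          simpa [D, g, Fin.sum_univ_succ] using h2
        exact h3.trans hω
      have hfc : Continuous f := continuous_of_sum_lip hf
      have hgc : Continuous g := continuous_of_sum_lip hg
      have hDmr : Measurable[futureSigma X r] D := by
        refine Measurable.sub ?_ ?_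
        · exact hfc.measurable.comp hvec_mr
        · exact hgc.measurable.comp
            (measurable_pi_lambda' (mα := futureSigma X r) _ fun i => hXmr i.succ)
      have hset : ∀ s : Set Ω, MeasurableSet[futureSigma X r] s →
          |((P[|A]) s).toReal - (P s).toReal| ≤ φ r := by
        intro s hs
        have h4 := hφ r hr1 A s hA hs hPA
        rw [cond_apply hAm, ENNReal.toReal_mul, ENNReal.toReal_inv, inv_mul_eq_div]
        exact h4
      have h1 : |∫ ω, D ω ∂(P[|A]) - ∫ ω, D ω ∂P| ≤ 2 * B * φ r :=
        integral_diff_le_of_meas_diff_le hmr (P[|A]) P cond_absolutelyContinuous hset hDmr hDbd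
      -- integrability of the two pieces under both measures
      have hball_vec : ∀ᵐ ω ∂P, ∀ i : Fin (mℓ+1), ‖X (j i) ω‖ ≤ B :=
        (ae_all_iff).2 fun i => hBall (j i)
      have hbd_f : ∀ᵐ ω ∂P, ‖f (fun i => X (j i) ω)‖ ≤ |f 0| + (mℓ+1) * B := by
        filter_upwards [hball_vec] with ω hω
        rw [Real.norm_eq_abs]
        have h5 := hf (fun i => X (j i) ω) 0
        have h6 : ∑ i : Fin (mℓ+1), ‖X (j i) ω - (0 : Fin (mℓ+1) → 𝒳) i‖ ≤ (mℓ+1) * B := by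
          calc ∑ i : Fin (mℓ+1), ‖X (j i) ω - (0 : Fin (mℓ+1) → 𝒳) i‖
              = ∑ i : Fin (mℓ+1), ‖X (j i) ω‖ := by simp
            _ ≤ ∑ _i : Fin (mℓ+1), B := Finset.sum_le_sum fun i _ => hω i
            _ = (mℓ+1) * B := by simp [Finset.sum_const, nsmul_eq_mul]
        calc |f (fun i => X (j i) ω)| ≤ |f (fun i => X (j i) ω) - f 0| + |f 0| := by
              have := abs_sub_abs_le_abs_sub (f (fun i => X (j i) ω)) (f 0)
              have := abs_add_le (f (fun i => X (j i) ω) - f 0) (f 0)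
              simpa using this
          _ ≤ |f 0| + (mℓ+1) * B := by
              have := (hf (fun i => X (j i) ω) 0).trans h6
              linarith
      have hbd_g : ∀ᵐ ω ∂P, ‖g (fun i => X (j i.succ) ω)‖ ≤ |g 0| + (mℓ) * B := by
        filter_upwards [hball_vec] with ω hω
        rw [Real.norm_eq_abs]
        have h6 : ∑ i : Fin mℓ, ‖X (j i.succ) ω - (0 : Fin mℓ → 𝒳) i‖ ≤ mℓ * B := by
          calc ∑ i : Fin mℓ, ‖X (j i.succ) ω - (0 : Fin mℓ → 𝒳) i‖
              = ∑ i : Fin mℓ, ‖X (j i.succ) ω‖ := by simp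
            _ ≤ ∑ _i : Fin mℓ, B := Finset.sum_le_sum fun i _ => hω i.succ
            _ = mℓ * B := by simp [Finset.sum_const, nsmul_eq_mul]
        calc |g (fun i => X (j i.succ) ω)| ≤ |g (fun i => X (j i.succ) ω) - g 0| + |g 0| := by
              have := abs_add_le (g (fun i => X (j i.succ) ω) - g 0) (g 0)
              simpa using this
          _ ≤ |g 0| + mℓ * B := by
              have := (hg (fun i => X (j i.succ) ω) 0).trans h6
              linarith
      have hint_f : ∀ (μ : Measure Ω) [IsProbabilityMeasure μ], μ ≪ P →
          Integrable (fun ω => f (fun i => X (j i) ω)) μ := by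
        intro μ _ hac
        exact (integrable_const (|f 0| + (mℓ+1) * B)).mono'
          (hfc.measurable.comp hvec_m).aestronglyMeasurable (hac.ae_le hbd_f)
      have hint_g : ∀ (μ : Measure Ω) [IsProbabilityMeasure μ], μ ≪ P →
          Integrable (fun ω => g (fun i => X (j i.succ) ω)) μ := by
        intro μ _ hac
        exact (integrable_const (|g 0| + mℓ * B)).mono'
          (hgc.measurable.comp (measurable_pi_lambda _ fun i => hXmeas (j i.succ))).aestronglyMeasurable
          (hac.ae_le hbd_g)
      have hsplit : ∀ (μ : Measure Ω) [IsProbabilityMeasure μ], μ ≪ P →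
          ∫ ω, D ω ∂μ = (∫ ω, f (fun i => X (j i) ω) ∂μ) - ∫ ω, g (fun i => X (j i.succ) ω) ∂μ := by
        intro μ _ hac
        exact integral_sub (hint_f μ hac) (hint_g μ hac)
      have e1 := hsplit (P[|A]) cond_absolutelyContinuous
      have e2 := hsplit P Measure.AbsolutelyContinuous.rfl
      rw [e1, e2] at h1
      have hfin : ∑ i : Fin (mℓ+1), φ (j i).toNat
          = φ r + ∑ i : Fin mℓ, φ (j i.succ).toNat := by
        rw [Fin.sum_univ_succ, hrdef]
      rw [hfin, mul_add]
      have htri : |∫ ω, f (fun i => X (j i) ω) ∂(P[|A]) - ∫ ω, f (fun i => X (j i) ω) ∂P|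
          ≤ |(∫ ω, f (fun i => X (j i) ω) ∂(P[|A]) - ∫ ω, g (fun i => X (j i.succ) ω) ∂(P[|A]))
              - ((∫ ω, f (fun i => X (j i) ω) ∂P) - ∫ ω, g (fun i => X (j i.succ) ω) ∂P)|
            + |∫ ω, g (fun i => X (j i.succ) ω) ∂(P[|A]) - ∫ ω, g (fun i => X (j i.succ) ω) ∂P| := by
        have := abs_add_le
          ((∫ ω, f (fun i => X (j i) ω) ∂(P[|A]) - ∫ ω, g (fun i => X (j i.succ) ω) ∂(P[|A]))
            - ((∫ ω, f (fun i => X (j i) ω) ∂P) - ∫ ω, g (fun i => X (j i.succ) ω) ∂P))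
          (∫ ω, g (fun i => X (j i.succ) ω) ∂(P[|A]) - ∫ ω, g (fun i => X (j i.succ) ω) ∂P)
        convert this using 2
        all_goals first | rfl | ring
      exact htri.trans (add_le_add h1 IHb)

/-- Proposition 4.3 (θ∞ bound for uniform φ-mixing processes): for a stationary
bounded process `X` with uniform mixing coefficients bounded by `φ(r)`, for all
indices `1 ≤ j₁ < … < j_ℓ ≤ n` and every 1-Lipschitz `f` (sum norm),
`|E(f(X_{j₁},…,X_{j_ℓ}) | σ(X_t, t ≤ 0)) − E f| ≤ 2‖X₀‖_∞ Σ_{r=1}^n φ(r)` a.s. -/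
theorem theta_infty_bound_phi_mixing
    {𝒳 : Type*} [NormedAddCommGroup 𝒳] [InnerProductSpace ℝ 𝒳] [CompleteSpace 𝒳]
    [SecondCountableTopology 𝒳] [MeasurableSpace 𝒳] [BorelSpace 𝒳]
    {Ω : Type*} [MeasurableSpace Ω] (P : Measure Ω) [IsProbabilityMeasure P]
    (X : ℤ → Ω → 𝒳) (hXmeas : ∀ t, Measurable (X t))
    (hstat : ∀ k : ℤ, Measure.map (fun ω (t : ℤ) => X (t + k) ω) P
      = Measure.map (fun ω (t : ℤ) => X t ω) P)
    (B : ℝ) (hB : ∀ᵐ ω ∂P, ‖X 0 ω‖ ≤ B)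
    (φ : ℕ → ℝ) (hφ0 : ∀ r, 0 ≤ φ r)
    (hφ : ∀ r : ℕ, 1 ≤ r → ∀ A B' : Set Ω,
      MeasurableSet[⨆ (t : ℤ) (_ : t ≤ 0), MeasurableSpace.comap (X t) inferInstance] A →
      MeasurableSet[⨆ (t : ℤ) (_ : (r : ℤ) ≤ t), MeasurableSpace.comap (X t) inferInstance] B' →
      P A ≠ 0 →
      |(P (A ∩ B')).toReal / (P A).toReal - (P B').toReal| ≤ φ r)
    (n : ℕ) (hn : 1 ≤ n) (ℓ : ℕ) (hℓ1 : 1 ≤ ℓ) (hℓn : ℓ ≤ n)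
    (j : Fin ℓ → ℤ) (hjmono : StrictMono j)
    (hj1 : ∀ i, 1 ≤ j i) (hjn : ∀ i, j i ≤ (n : ℤ))
    (f : (Fin ℓ → 𝒳) → ℝ)
    (hf : ∀ x y : Fin ℓ → 𝒳, |f x - f y| ≤ ∑ i, ‖x i - y i‖) :
    ∀ᵐ ω ∂P,
      |(P[(fun ω' => f (fun i => X (j i) ω')) |
            ⨆ (t : ℤ) (_ : t ≤ 0), MeasurableSpace.comap (X t) inferInstance]) ω
        - ∫ ω', f (fun i => X (j i) ω') ∂P|
        ≤ 2 * B * ∑ r ∈ Finset.Icc 1 n, φ r := by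
  classical
  -- stationarity: all marginals share the law of `X 0`
  have hmap : ∀ t : ℤ, Measure.map (X t) P = Measure.map (X 0) P := by
    intro t
    have h2 := congrArg (Measure.map (fun g : ℤ → 𝒳 => g 0)) (hstat t)
    rw [Measure.map_map (measurable_pi_apply 0) (measurable_pi_lambda _ fun s => hXmeas _),
        Measure.map_map (measurable_pi_apply 0) (measurable_pi_lambda _ fun s => hXmeas _)] at h2
    simpa [Function.comp_def] using h2
  have hsnorm : MeasurableSet {x : 𝒳 | ‖x‖ ≤ B} := measurableSet_le measurable_norm measurable_const
  have hBall : ∀ t : ℤ, ∀ᵐ ω ∂P, ‖X t ω‖ ≤ B := by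
    intro t
    have h0 : ∀ᵐ x ∂(Measure.map (X 0) P), ‖x‖ ≤ B :=
      (ae_map_iff (hXmeas 0).aemeasurable hsnorm).2 hB
    rw [← hmap t] at h0
    exact (ae_map_iff (hXmeas t).aemeasurable hsnorm).1 h0
  have hB0 : 0 ≤ B := by
    obtain ⟨ω, hω⟩ := hB.exists
    exact (norm_nonneg _).trans hω
  have hm0 : pastSigma X ≤ ‹MeasurableSpace Ω› :=
    iSup_le fun t => iSup_le fun _ => (hXmeas t).comap_le
  set Y : Ω → ℝ := fun ω' => f (fun i => X (j i) ω') with hYdef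
  have hfc : Continuous f := continuous_of_sum_lip hf
  have hYmeas : Measurable Y :=
    hfc.measurable.comp (measurable_pi_lambda _ fun i => hXmeas (j i))
  have hball_vec : ∀ᵐ ω ∂P, ∀ i : Fin ℓ, ‖X (j i) ω‖ ≤ B :=
    (ae_all_iff).2 fun i => hBall (j i)
  have hYbd : ∀ᵐ ω ∂P, ‖Y ω‖ ≤ |f 0| + ℓ * B := by
    filter_upwards [hball_vec] with ω hω
    rw [Real.norm_eq_abs]
    have h6 : ∑ i : Fin ℓ, ‖X (j i) ω - (0 : Fin ℓ → 𝒳) i‖ ≤ ℓ * B := by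
      calc ∑ i : Fin ℓ, ‖X (j i) ω - (0 : Fin ℓ → 𝒳) i‖
          = ∑ i : Fin ℓ, ‖X (j i) ω‖ := by simp
        _ ≤ ∑ _i : Fin ℓ, B := Finset.sum_le_sum fun i _ => hω i
        _ = ℓ * B := by simp [Finset.sum_const, nsmul_eq_mul]
    have h5 := (hf (fun i => X (j i) ω) 0).trans h6
    calc |Y ω| ≤ |Y ω - f 0| + |f 0| := by
          have := abs_add_le (Y ω - f 0) (f 0); simpa using this
      _ ≤ |f 0| + ℓ * B := by
          have : |Y ω - f 0| ≤ ℓ * B := h5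
          linarith
  have hYint : Integrable Y P :=
    (integrable_const (|f 0| + ℓ * B)).mono' hYmeas.aestronglyMeasurable hYbd
  set I : ℝ := ∫ ω', Y ω' ∂P with hIdef
  set C : ℝ := 2 * B * ∑ i, φ (j i).toNat with hCdef
  -- set-integral bound from the induction lemma
  have hsetbound : ∀ A : Set Ω, MeasurableSet[pastSigma X] A → P A ≠ 0 →
      |(∫ ω in A, Y ω ∂P) - (P A).toReal * I| ≤ (P A).toReal * C := by
    intro A hA hPA
    have hk := key_induction P X hXmeas B hBall φ hφ ℓ j hjmono hj1 f hf A hA hPA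
    have hc : ∫ ω, Y ω ∂(P[|A]) = (P A).toReal⁻¹ * ∫ ω in A, Y ω ∂P := by
      have hcnd : P[|A] = (P A)⁻¹ • P.restrict A := rfl
      rw [hcnd, integral_smul_measure, smul_eq_mul, ENNReal.toReal_inv]
    have hpA : 0 < (P A).toReal := ENNReal.toReal_pos hPA (measure_ne_top P A)
    have heq : (∫ ω in A, Y ω ∂P) - (P A).toReal * I
        = (P A).toReal * ((∫ ω, Y ω ∂(P[|A])) - I) := by
      rw [hc]; field_simp
    rw [heq, abs_mul, abs_of_pos hpA]
    exact mul_le_mul_of_nonneg_left (by rw [hc] at hk ⊢; exact hk) hpA.le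
  -- conditional expectation bound via epsilon sets
  set W : Ω → ℝ := P[Y | pastSigma X] with hWdef
  have hWm : Measurable[pastSigma X] W := stronglyMeasurable_condExp.measurable
  have hWint : Integrable W P := integrable_condExp
  have hWA : ∀ A : Set Ω, MeasurableSet[pastSigma X] A →
      ∫ ω in A, W ω ∂P = ∫ ω in A, Y ω ∂P :=
    fun A hA => setIntegral_condExp hm0 hYint hA
  have upper : ∀ᵐ ω ∂P, W ω - I ≤ C := by
    rw [ae_iff]
    have hsub : {ω | ¬ (W ω - I ≤ C)} ⊆ ⋃ k : ℕ, {ω | C + 1/(k+1) ≤ W ω - I} := by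
      intro ω hω
      have hlt : C < W ω - I := not_le.1 hω
      obtain ⟨k, hk⟩ := exists_nat_one_div_lt (sub_pos.2 hlt)
      refine Set.mem_iUnion.2 ⟨k, ?_⟩
      simp only [Set.mem_setOf_eq]
      push_cast at hk ⊢
      linarith
    refine measure_mono_null hsub (measure_iUnion_null fun k => ?_)
    have hAm0 : MeasurableSet[pastSigma X] {ω | C + 1/(k+1) ≤ W ω - I} :=
      measurableSet_le measurable_const (hWm.sub_const I)
    by_contra hA0
    have hbound := hsetbound _ hAm0 hA0
    have hWAeq := hWA _ hAm0
    have hpA : 0 < (P {ω | C + 1/(k+1) ≤ W ω - I}).toReal :=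
      ENNReal.toReal_pos hA0 (measure_ne_top P _)
    have hgeq : (C + 1/(k+1) + I) * (P {ω | C + 1/(k+1) ≤ W ω - I}).toReal
        ≤ ∫ ω in {ω | C + 1/(k+1) ≤ W ω - I}, W ω ∂P := by
      rw [mul_comm, ← smul_eq_mul, ← measureReal_def]
      refine setIntegral_ge_of_const_le (hm0 _ hAm0) (measure_ne_top P _)
        (fun ω hω => ?_) hWint.integrableOn
      have := hω
      simp only [Set.mem_setOf_eq] at this
      linarith
    rw [hWAeq] at hgeq
    have habs := abs_le.1 hbound
    have hk1 : (0:ℝ) < 1/(k+1) := by positivity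
    nlinarith [habs.1, habs.2, hgeq, hpA, hk1]
  have lower : ∀ᵐ ω ∂P, -C ≤ W ω - I := by
    rw [ae_iff]
    have hsub : {ω | ¬ (-C ≤ W ω - I)} ⊆ ⋃ k : ℕ, {ω | W ω - I ≤ -(C + 1/(k+1))} := by
      intro ω hω
      have hlt : W ω - I < -C := not_le.1 hω
      obtain ⟨k, hk⟩ := exists_nat_one_div_lt (by linarith : (0:ℝ) < -C - (W ω - I))
      refine Set.mem_iUnion.2 ⟨k, ?_⟩
      simp only [Set.mem_setOf_eq]
      push_cast at hk ⊢
      linarith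
    refine measure_mono_null hsub (measure_iUnion_null fun k => ?_)
    have hAm0 : MeasurableSet[pastSigma X] {ω | W ω - I ≤ -(C + 1/(k+1))} :=
      measurableSet_le (hWm.sub_const I) measurable_const
    by_contra hA0
    have hbound := hsetbound _ hAm0 hA0
    have hWAeq := hWA _ hAm0
    have hpA : 0 < (P {ω | W ω - I ≤ -(C + 1/(k+1))}).toReal :=
      ENNReal.toReal_pos hA0 (measure_ne_top P _)
    have hgeq : (C + 1/(k+1) - I) * (P {ω | W ω - I ≤ -(C + 1/(k+1))}).toReal
        ≤ ∫ ω in {ω | W ω - I ≤ -(C + 1/(k+1))}, (fun ω' => - W ω') ω ∂P := by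
      rw [mul_comm, ← smul_eq_mul, ← measureReal_def]
      refine setIntegral_ge_of_const_le (hm0 _ hAm0) (measure_ne_top P _)
        (fun ω hω => ?_) hWint.neg.integrableOn
      have := hω
      simp only [Set.mem_setOf_eq] at this
      linarith
    rw [integral_neg, hWAeq] at hgeq
    have habs := abs_le.1 hbound
    have hk1 : (0:ℝ) < 1/(k+1) := by positivity
    nlinarith [habs.1, habs.2, hgeq, hpA, hk1]
  -- compare the two sums over indices
  have hsum : ∑ i, φ (j i).toNat ≤ ∑ r ∈ Finset.Icc 1 n, φ r := by
    have hinj : ∀ a ∈ Finset.univ, ∀ b ∈ Finset.univ,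
        (fun i : Fin ℓ => (j i).toNat) a = (fun i : Fin ℓ => (j i).toNat) b → a = b := by
      intro a _ b _ hab
      apply hjmono.injective
      have ha := hj1 a; have hb := hj1 b
      simp only at hab
      omega
    calc ∑ i, φ (j i).toNat
        = ∑ r ∈ Finset.image (fun i : Fin ℓ => (j i).toNat) Finset.univ, φ r :=
          (Finset.sum_image hinj).symm
      _ ≤ ∑ r ∈ Finset.Icc 1 n, φ r := by
          refine Finset.sum_le_sum_of_subset_of_nonneg ?_ (fun r _ _ => hφ0 r)
          intro r hr
          obtain ⟨i, _, hi⟩ := Finset.mem_image.1 hr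
          have h1 := hj1 i; have h2 := hjn i
          rw [Finset.mem_Icc]
          omega
  have hCle : C ≤ 2 * B * ∑ r ∈ Finset.Icc 1 n, φ r := by
    rw [hCdef]
    exact mul_le_mul_of_nonneg_left hsum (by linarith)
  filter_upwards [upper, lower] with ω h1 h2
  exact (abs_le.2 ⟨by linarith, by linarith⟩).trans hCle
end
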